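/- Let k, l ≥ 1 with k + l ≤ m. Then every A ∈ U_{k+l} can be written as A = A₁ + A₂ with A₁ ∈ U_k and A₂ ∈ U_l (i.e., U_{k+l} ⊆ U_k + U_l). Moreover the inclusion is strict: there exist A₁ ∈ U_k and A₂ ∈ U_l with A₁ + A₂ ∉ U_{k+l}. -/

import Mathlib

/-- A (row-)stochastic matrix. -/
def IsStochastic (m : ℕ) (T : Matrix (Fin m) (Fin m) ℝ) : Prop :=
  (∀ i j, 0 ≤ T i j) ∧ ∀ i, ∑ j, T i j = 1

/-- `T_k`: matrices with entries in `[0,1]` and all row sums equal to `k`. -/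
def Tset (m k : ℕ) : Set (Matrix (Fin m) (Fin m) ℝ) :=
  {T | (∀ i j, 0 ≤ T i j ∧ T i j ≤ 1) ∧ ∀ i, ∑ j, T i j = (k : ℝ)}

/-- `U_k`: the symmetrization of `T_k`. -/
def Uset (m k : ℕ) : Set (Matrix (Fin m) (Fin m) ℝ) :=
  {A | ∃ T ∈ Tset m k, A = (1 / 2 : ℝ) • (T + T.transpose)}

/-- The all-ones matrix `E`. -/
def Ematrix (m : ℕ) : Matrix (Fin m) (Fin m) ℝ := Matrix.of fun _ _ => 1

lemma sum_ind (m k : ℕ) (hk : k ≤ m) :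
    ∑ j : Fin m, (if (j : ℕ) < k then (1 : ℝ) else 0) = k := by
  rw [Fin.sum_univ_eq_sum_range (fun n => if n < k then (1 : ℝ) else 0)]
  rw [Finset.sum_ite, Finset.sum_const, Finset.sum_const_zero, add_zero]
  have : (Finset.range m).filter (fun n => n < k) = Finset.range k := by
    ext n; simp; omega
  rw [this]
  simp

/-- The indicator matrix of the first `k` columns lies in `Tset m k`. -/
lemma indicator_mem_Tset (m k : ℕ) (hk : k ≤ m) :
    (Matrix.of fun _ j : Fin m => if (j : ℕ) < k then (1 : ℝ) else 0) ∈ Tset m k := by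
  constructor
  · intro i j
    by_cases h : (j : ℕ) < k <;> simp [Matrix.of_apply, h]
  · intro i
    simpa using sum_ind m k hk

/-- `U_(k+l) ⊆ U_k + U_l`, and the inclusion is strict. -/
theorem Uk_add_Ul (m k l : ℕ) (hk : 1 ≤ k) (hl : 1 ≤ l) (hkl : k + l ≤ m) :
    (∀ A ∈ Uset m (k + l), ∃ A₁ ∈ Uset m k, ∃ A₂ ∈ Uset m l, A = A₁ + A₂) ∧
      (∃ A₁ ∈ Uset m k, ∃ A₂ ∈ Uset m l, A₁ + A₂ ∉ Uset m (k + l)) := by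
  have hklpos : (0 : ℝ) < (k : ℝ) + l := by positivity
  constructor
  · rintro A ⟨T, ⟨hT01, hTsum⟩, rfl⟩
    set c : ℝ := (k : ℝ) / ((k : ℝ) + l) with hc
    set d : ℝ := (l : ℝ) / ((k : ℝ) + l) with hd
    have hc0 : 0 ≤ c := by positivity
    have hd0 : 0 ≤ d := by positivity
    have hc1 : c ≤ 1 := by
      rw [hc, div_le_one hklpos]
      have : (1:ℝ) ≤ l := by exact_mod_cast hl
      linarith
    have hd1 : d ≤ 1 := by
      rw [hd, div_le_one hklpos]
      have : (1:ℝ) ≤ k := by exact_mod_cast hk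
      linarith
    refine ⟨(1 / 2 : ℝ) • ((c • T) + (c • T).transpose), ⟨c • T, ?_, rfl⟩,
      (1 / 2 : ℝ) • ((d • T) + (d • T).transpose), ⟨d • T, ?_, rfl⟩, ?_⟩
    · constructor
      · intro i j
        constructor
        · exact mul_nonneg hc0 (hT01 i j).1
        · calc c * T i j ≤ 1 * 1 := by
                apply mul_le_mul hc1 (hT01 i j).2 (hT01 i j).1 zero_le_one
            _ = 1 := by ring
      · intro i
        have : ∑ j, c * T i j = c * ∑ j, T i j := by rw [Finset.mul_sum]
        simp only [Matrix.smul_apply, smul_eq_mul]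
        rw [this, hTsum i, hc]
        push_cast
        field_simp
    · constructor
      · intro i j
        constructor
        · exact mul_nonneg hd0 (hT01 i j).1
        · calc d * T i j ≤ 1 * 1 := by
                apply mul_le_mul hd1 (hT01 i j).2 (hT01 i j).1 zero_le_one
            _ = 1 := by ring
      · intro i
        have : ∑ j, d * T i j = d * ∑ j, T i j := by rw [Finset.mul_sum]
        simp only [Matrix.smul_apply, smul_eq_mul]
        rw [this, hTsum i, hd]
        push_cast
        field_simp
    · have hcd : c + d = 1 := by rw [hc, hd]; field_simp
      ext i j
      simp only [Matrix.smul_apply, Matrix.add_apply, Matrix.transpose_apply,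
        smul_eq_mul]
      rw [hc, hd]
      have hne : (k:ℝ) + l ≠ 0 := ne_of_gt hklpos
      field_simp
  · -- strictness: pick indicator matrices, whose sum has a diagonal entry 2 > 1
    have hm : 0 < m := by omega
    set z : Fin m := ⟨0, hm⟩ with hz
    set T₁ : Matrix (Fin m) (Fin m) ℝ :=
      Matrix.of fun _ j : Fin m => if (j : ℕ) < k then (1 : ℝ) else 0 with hT1
    set T₂ : Matrix (Fin m) (Fin m) ℝ :=
      Matrix.of fun _ j : Fin m => if (j : ℕ) < l then (1 : ℝ) else 0 with hT2
    refine ⟨(1 / 2 : ℝ) • (T₁ + T₁.transpose), ⟨T₁, indicator_mem_Tset m k (by omega), rfl⟩,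
      (1 / 2 : ℝ) • (T₂ + T₂.transpose), ⟨T₂, indicator_mem_Tset m l (by omega), rfl⟩, ?_⟩
    rintro ⟨T, ⟨hT01, hTsum⟩, hEq⟩
    have h1 : ((1 / 2 : ℝ) • (T₁ + T₁.transpose) + (1 / 2 : ℝ) • (T₂ + T₂.transpose)) z z
        = 2 := by
      simp only [Matrix.add_apply, Matrix.smul_apply, Matrix.transpose_apply, smul_eq_mul,
        hT1, hT2, Matrix.of_apply, hz]
      have h0k : (0 : ℕ) < k := hk
      have h0l : (0 : ℕ) < l := hl
      simp [h0k, h0l]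
      norm_num
    have h2 : ((1 / 2 : ℝ) • (T + T.transpose)) z z = T z z := by
      simp only [Matrix.smul_apply, Matrix.add_apply, Matrix.transpose_apply, smul_eq_mul]
      ring
    rw [← hEq, h1] at h2
    have := (hT01 z z).2
    linarith
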